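/- Supportedness for aggregate programs: under the same setting as the previous statement (rules with one head atom, finite positive bodies, cardinality aggregate conditions; A an answer set, i.e., the least model of the aggregate reduct of Π w.r.t. A), for every atom a ∈ A there exists a rule r ∈ Π with head a such that all positive body atoms of r are in A and all aggregate conditions of r hold in A. -/
import Mathlib


/-- Models and least models of ground definite programs. -/
def IsModel {α : Type*} (P : Set (α × Set α)) (A : Set α) : Prop :=
  ∀ r ∈ P, r.2 ⊆ A → r.1 ∈ A

def IsLeastModel {α : Type*} (P : Set (α × Set α)) (A : Set α) : Prop :=
  IsModel P A ∧ ∀ M : Set α, IsModel P M → A ⊆ M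

/-- The six arithmetic relations. -/
inductive AggRel | eq | lt | gt | le | ge | ne

def AggRel.eval : AggRel → ℕ → ℕ → Prop
  | .eq, a, b => a = b
  | .lt, a, b => a < b
  | .gt, a, b => a > b
  | .le, a, b => a ≤ b
  | .ge, a, b => a ≥ b
  | .ne, a, b => a ≠ b

/-- An aggregate condition `|{t : p(t) ∈ S}| ⊙ n`. -/
structure AggCond (τ α : Type*) where
  pred : τ → α
  rel : AggRel
  n : ℕ

def AggCond.holds {τ α : Type*} (c : AggCond τ α) (S : Set α) : Prop :=
  c.rel.eval (Set.ncard {t : τ | c.pred t ∈ S}) c.n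

/-- A rule: one head atom, a finite set of positive body atoms and a finite set of
aggregate conditions. -/
structure ARule (τ α : Type*) where
  head : α
  body : Finset α
  aggs : List (AggCond τ α)

/-- Aggregate reduct w.r.t. A: delete rules with a failing aggregate condition;
replace the conditions of surviving rules by the atoms {p(t) : p(t) ∈ A}. -/
def reduct {τ α : Type*} (P : Set (ARule τ α)) (A : Set α) : Set (α × Set α) :=
  {r | ∃ q ∈ P, (∀ c ∈ q.aggs, c.holds A) ∧
    r = (q.head, ↑q.body ∪ {a : α | ∃ c ∈ q.aggs, ∃ t : τ, c.pred t ∈ A ∧ a = c.pred t})}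

def AnswerSet {τ α : Type*} (P : Set (ARule τ α)) (A : Set α) : Prop :=
  IsLeastModel (reduct P A) A

/-- Supportedness for aggregate programs: every atom of an answer set is supported
by a rule whose positive body is in A and whose aggregate conditions hold in A. -/
theorem answer_set_supported {τ α : Type*} (P : Set (ARule τ α)) (A : Set α)
    (h : AnswerSet P A) :
    ∀ a ∈ A, ∃ r ∈ P, r.head = a ∧ ↑r.body ⊆ A ∧ ∀ c ∈ r.aggs, c.holds A := by
  intro a ha
  by_contra hno
  push_neg at hno
  have hM : IsModel (reduct P A) (A \ {a}) := by
    rintro ⟨hd, bd⟩ ⟨q, hqP, hagg, heq⟩ hsub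
    have heq1 : hd = q.head := (Prod.mk.injEq _ _ _ _ ▸ heq).1
    have heq2 : bd = ↑q.body ∪ {x : α | ∃ c ∈ q.aggs, ∃ t : τ, c.pred t ∈ A ∧ x = c.pred t} :=
      (Prod.mk.injEq _ _ _ _ ▸ heq).2
    have hbdA : bd ⊆ A := hsub.trans (Set.diff_subset)
    have hhdA : hd ∈ A := h.1 ⟨hd, bd⟩ ⟨q, hqP, hagg, heq⟩ hbdA
    simp only [Set.mem_diff, Set.mem_singleton_iff]
    refine ⟨hhdA, ?_⟩
    intro hda
    obtain ⟨c, hc, hcn⟩ := hno q hqP (heq1 ▸ hda)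
      (fun x hx => hbdA (heq2 ▸ Set.mem_union_left _ hx))
    exact hcn (hagg c hc)
  have := h.2 _ hM ha
  exact this.2 rfl
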